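/- Let C(q) be a formal power series with constant term 1, γ an arithmetic function, and define s^{(−1)}_{n,k} := ∑_{d|n} c(d−k)·γ(n/d) where c(m) := [q^m] 1/C(q) (with c(m)=0 for m<0). Define t_{k,d} := [q^k] C(q)·q^{αd+β}/(1−q^{αd+β}) for fixed integers α ≥ 1, 0 ≤ β < α. Then for all n ≥ 1 and d ≥ 1: ∑_{k=1}^n s^{(−1)}_{n,k} t_{k,d} = ∑_{d' | n, (αd+β) | d'} γ(n/d'). -/

import Mathlib

open PowerSeries Finset

lemma coeff_geom_aux (m : ℕ) (hm : 1 ≤ m) (e : ℕ) :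
    (PowerSeries.coeff e) ((X : PowerSeries ℂ) ^ m * (1 - (X : PowerSeries ℂ) ^ m)⁻¹) =
      if m ∣ e ∧ 1 ≤ e then 1 else 0 := by
  set S : PowerSeries ℂ := PowerSeries.mk fun j => if m ∣ j then (1 : ℂ) else 0 with hSdef
  have hconst : constantCoeff (1 - (X : PowerSeries ℂ) ^ m) ≠ 0 := by
    simp [map_sub, PowerSeries.constantCoeff_X, zero_pow (show m ≠ 0 by omega)]
  have hsub : ∀ j, m ≤ j → m ∣ j - m → m ∣ j := by
    intro j hle h
    have := Nat.dvd_add h (dvd_refl m)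
    rwa [Nat.sub_add_cancel hle] at this
  have hS : S = (1 - (X : PowerSeries ℂ) ^ m)⁻¹ := by
    rw [PowerSeries.eq_inv_iff_mul_eq_one hconst]
    ext j
    rw [mul_sub, mul_one, map_sub, PowerSeries.coeff_mul_X_pow']
    simp only [hSdef, PowerSeries.coeff_mk, PowerSeries.coeff_one]
    rcases Nat.eq_zero_or_pos j with rfl | hj
    · simp [show ¬ m ≤ 0 by omega]
    · by_cases hdvd : m ∣ j
      · have hle : m ≤ j := Nat.le_of_dvd hj hdvd
        have hdvd' : m ∣ j - m := Nat.dvd_sub hdvd dvd_rfl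
        simp [hdvd, hle, hdvd', show j ≠ 0 by omega]
      · by_cases hle : m ≤ j
        · have hdvd' : ¬ m ∣ j - m := fun h => hdvd (hsub j hle h)
          simp [hdvd, hle, hdvd', show j ≠ 0 by omega]
        · simp [hdvd, hle, show j ≠ 0 by omega]
  rw [← hS, mul_comm, PowerSeries.coeff_mul_X_pow']
  simp only [hSdef, PowerSeries.coeff_mk]
  split_ifs with h1 h2 h3 h4 h5 <;> try rfl
  · exact absurd ⟨hsub e h1 h2, by omega⟩ h3
  · exact absurd (Nat.dvd_sub h4.1 dvd_rfl) h2
  · exact absurd (Nat.le_of_dvd (by omega) h5.1) h1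

/-- with `c(m) = [q^m] 1/C(q)` (zero for negative index),
`s⁻¹_{n,k} = ∑_{d∣n} c(d−k) γ(n/d)`, and `t_{k,d} = [q^k] C(q) q^{αd+β}/(1−q^{αd+β})`,
we have `∑_{k=1}^n s⁻¹_{n,k} t_{k,d} = ∑_{d'∣n, (αd+β)∣d'} γ(n/d')`. -/
theorem inverse_times_t_eq_divisor_sum
    (C : PowerSeries ℂ) (hC : constantCoeff C = 1) (γ : ℕ → ℂ) (α β : ℕ)
    (hα : 1 ≤ α) (hβ : β < α)
    (c : ℕ → ℂ) (hc : ∀ m, c m = (PowerSeries.coeff m) C⁻¹)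
    (sInv : ℕ → ℕ → ℂ)
    (hsInv : ∀ n k, sInv n k =
      ∑ d ∈ n.divisors, (if k ≤ d then c (d - k) else 0) * γ (n / d))
    (t : ℕ → ℕ → ℂ)
    (ht : ∀ k d, t k d =
      (PowerSeries.coeff k)
        (C * ((X : PowerSeries ℂ) ^ (α * d + β) * (1 - (X : PowerSeries ℂ) ^ (α * d + β))⁻¹)))
    (n d : ℕ) (hn : 1 ≤ n) (hd : 1 ≤ d) :
    ∑ k ∈ Finset.Icc 1 n, sInv n k * t k d =
      ∑ d' ∈ n.divisors, if (α * d + β) ∣ d' then γ (n / d') else 0 := by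
  set m := α * d + β with hmdef
  have hm : 1 ≤ m := by have := Nat.mul_le_mul hα hd; omega
  set G : PowerSeries ℂ := (X : PowerSeries ℂ) ^ m * (1 - (X : PowerSeries ℂ) ^ m)⁻¹ with hGdef
  have hCne : constantCoeff C ≠ 0 := by rw [hC]; exact one_ne_zero
  have hG0 : (PowerSeries.coeff 0) G = 0 := by
    rw [coeff_geom_aux m hm 0]; simp
  have ht0 : t 0 d = 0 := by
    rw [ht, PowerSeries.coeff_zero_eq_constantCoeff, map_mul, hC, one_mul,
      ← PowerSeries.coeff_zero_eq_constantCoeff, hG0]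
  -- key inner sum computation
  have key : ∀ e ∈ n.divisors,
      (∑ k ∈ Finset.Icc 1 n, (if k ≤ e then c (e - k) else 0) * t k d)
        = if m ∣ e then 1 else 0 := by
    intro e he
    rw [Nat.mem_divisors] at he
    have he1 : 1 ≤ e := Nat.pos_of_dvd_of_pos he.1 (by omega)
    have hen : e ≤ n := Nat.le_of_dvd (by omega) he.1
    have step1 : (∑ k ∈ Finset.Icc 1 n, (if k ≤ e then c (e - k) else 0) * t k d)
        = ∑ k ∈ Finset.Icc 1 e, c (e - k) * t k d := by
      rw [← Finset.sum_subset (Finset.Icc_subset_Icc_right hen)]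
      · refine Finset.sum_congr rfl fun k hk => ?_
        rw [Finset.mem_Icc] at hk
        rw [if_pos hk.2]
      · intro k hk hk'
        rw [Finset.mem_Icc] at hk
        simp only [Finset.mem_Icc, not_and, not_le] at hk'
        rw [if_neg (by omega : ¬ k ≤ e), zero_mul]
    have hrange : Finset.range (e + 1) = insert 0 (Finset.Icc 1 e) := by
      ext x; simp [Nat.lt_succ_iff]; omega
    have step2 : (∑ k ∈ Finset.range (e + 1), c (e - k) * t k d)
        = ∑ k ∈ Finset.Icc 1 e, c (e - k) * t k d := by
      rw [hrange, Finset.sum_insert (by simp)]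
      simp [ht0]
    have step3 : (∑ k ∈ Finset.range (e + 1), c (e - k) * t k d)
        = (PowerSeries.coeff e) G := by
      have : C⁻¹ * (C * G) = G := by
        rw [← mul_assoc, PowerSeries.inv_mul_cancel C hCne, one_mul]
      rw [← this, mul_comm, PowerSeries.coeff_mul,
        Finset.Nat.sum_antidiagonal_eq_sum_range_succ_mk]
      refine Finset.sum_congr rfl fun k _ => ?_
      rw [hc, ht, mul_comm]
    rw [step1, ← step2, step3, coeff_geom_aux m hm e]
    simp [he1]
  calc ∑ k ∈ Finset.Icc 1 n, sInv n k * t k d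
      = ∑ k ∈ Finset.Icc 1 n, ∑ e ∈ n.divisors,
          (if k ≤ e then c (e - k) else 0) * γ (n / e) * t k d := by
        refine Finset.sum_congr rfl fun k _ => ?_
        rw [hsInv, Finset.sum_mul]
    _ = ∑ e ∈ n.divisors, ∑ k ∈ Finset.Icc 1 n,
          (if k ≤ e then c (e - k) else 0) * t k d * γ (n / e) := by
        rw [Finset.sum_comm]
        exact Finset.sum_congr rfl fun e _ => Finset.sum_congr rfl fun k _ => by ring
    _ = ∑ e ∈ n.divisors, (if m ∣ e then 1 else 0) * γ (n / e) := by
        refine Finset.sum_congr rfl fun e he => ?_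
        rw [← Finset.sum_mul, key e he]
    _ = ∑ d' ∈ n.divisors, if m ∣ d' then γ (n / d') else 0 := by
        refine Finset.sum_congr rfl fun e _ => ?_
        split_ifs <;> simp
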